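/- Let N, b, m, τ, k be positive reals with Nbmτ ≤ 1. Then the function g(γ) = 1/(1 + (γτNb + k)/(γNb(γτNb + k) + k²mNb)) is nondecreasing on [0, ∞), so its infimum over γ ≥ 0 is attained at γ* = 0. -/
import Mathlib


theorem dapi_gamma_star_zero_complete_graph
    (N b m τ k : ℝ) (hN : 0 < N) (hb : 0 < b) (hm : 0 < m) (hτ : 0 < τ) (hk : 0 < k)
    (hcond : N * b * m * τ ≤ 1) :
    MonotoneOn (fun γ : ℝ => 1 / (1 + (γ * τ * (N * b) + k) /
        (γ * (N * b) * (γ * τ * (N * b) + k) + k ^ 2 * m * (N * b)))) (Set.Ici 0) ∧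
    (∀ γ : ℝ, 0 ≤ γ →
      1 / (1 + ((0 : ℝ) * τ * (N * b) + k) /
          ((0 : ℝ) * (N * b) * ((0 : ℝ) * τ * (N * b) + k) + k ^ 2 * m * (N * b)))
        ≤ 1 / (1 + (γ * τ * (N * b) + k) /
          (γ * (N * b) * (γ * τ * (N * b) + k) + k ^ 2 * m * (N * b)))) := by
  have hβ : 0 < N * b := mul_pos hN hb
  have hmono : MonotoneOn (fun γ : ℝ => 1 / (1 + (γ * τ * (N * b) + k) /
        (γ * (N * b) * (γ * τ * (N * b) + k) + k ^ 2 * m * (N * b)))) (Set.Ici 0) := by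
    intro x hx y hy hxy
    simp only [Set.mem_Ici] at hx hy
    have hAx : 0 < x * τ * (N * b) + k := by positivity
    have hAy : 0 < y * τ * (N * b) + k := by positivity
    have hDx : 0 < x * (N * b) * (x * τ * (N * b) + k) + k ^ 2 * m * (N * b) := by
      have : 0 ≤ x * (N * b) * (x * τ * (N * b) + k) := by positivity
      nlinarith [sq_nonneg k, mul_pos (mul_pos (pow_pos hk 2) hm) hβ]
    have hDy : 0 < y * (N * b) * (y * τ * (N * b) + k) + k ^ 2 * m * (N * b) := by
      have : 0 ≤ y * (N * b) * (y * τ * (N * b) + k) := by positivity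
      nlinarith [mul_pos (mul_pos (pow_pos hk 2) hm) hβ]
    have hf : (y * τ * (N * b) + k) /
        (y * (N * b) * (y * τ * (N * b) + k) + k ^ 2 * m * (N * b)) ≤
        (x * τ * (N * b) + k) /
        (x * (N * b) * (x * τ * (N * b) + k) + k ^ 2 * m * (N * b)) := by
      rw [div_le_div_iff₀ hDy hDx]
      have key : 0 ≤ (N * b) * (y - x) *
          ((x * τ * (N * b) + k) * (y * τ * (N * b) + k) - k ^ 2 * m * τ * (N * b)) := by
        have h1 : k ^ 2 * m * τ * (N * b) ≤ k ^ 2 := by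
          have : m * τ * (N * b) ≤ 1 := by nlinarith
          nlinarith [sq_nonneg k, pow_pos hk 2]
        have h2 : k ^ 2 ≤ (x * τ * (N * b) + k) * (y * τ * (N * b) + k) := by
          nlinarith [mul_nonneg (mul_nonneg hx hτ.le) hβ.le,
            mul_nonneg (mul_nonneg hy hτ.le) hβ.le,
            mul_nonneg (mul_nonneg (mul_nonneg hx hτ.le) hβ.le)
              (mul_nonneg (mul_nonneg hy hτ.le) hβ.le)]
        have h3 : 0 ≤ y - x := sub_nonneg.2 hxy
        nlinarith [mul_nonneg (mul_nonneg hβ.le h3) (by linarith : (0:ℝ) ≤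
          (x * τ * (N * b) + k) * (y * τ * (N * b) + k) - k ^ 2 * m * τ * (N * b))]
      nlinarith [key]
    have h1x : 0 < 1 + (x * τ * (N * b) + k) /
        (x * (N * b) * (x * τ * (N * b) + k) + k ^ 2 * m * (N * b)) := by
      have := div_pos hAx hDx; linarith
    have h1y : 0 < 1 + (y * τ * (N * b) + k) /
        (y * (N * b) * (y * τ * (N * b) + k) + k ^ 2 * m * (N * b)) := by
      have := div_pos hAy hDy; linarith
    exact one_div_le_one_div_of_le h1y (by linarith)
  refine ⟨hmono, fun γ hγ => hmono (Set.mem_Ici.2 le_rfl) (Set.mem_Ici.2 hγ) hγ⟩
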